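/- Let D ∈ GLₙ(ℤ) and let λ₁, …, λₙ be the complex eigenvalues of D (the roots of its characteristic polynomial, counted with multiplicity). Then there exist non-negative integers a, b and complex numbers μ₁, …, μ_a, ν₁, …, ν_b such that for every positive integer k, ( ∏_{i=1}^{n} |1 − λᵢᵏ| + ∏_{i=1}^{n} |1 + λᵢᵏ| )/2 = μ₁ᵏ + ⋯ + μ_aᵏ − ν₁ᵏ − ⋯ − ν_bᵏ. -/

import Mathlib

open Matrix Polynomial

private lemma real_sign (x : ℝ) : ∃ s t : ℝ, (s = 1 ∨ s = -1) ∧ (t = 1 ∨ t = -1) ∧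
    ∀ k : ℕ, 0 < k → s ^ k * t * (1 - x ^ k) = |1 - x ^ k| ∧
      s ^ k * (1 + x ^ k) = |1 + x ^ k| := by
  by_cases h1 : x < -1
  · refine ⟨-1, -1, Or.inr rfl, Or.inr rfl, fun k hk => ?_⟩
    rcases Nat.even_or_odd k with he | ho
    · have hx : (1:ℝ) ≤ x ^ k := by
        calc (1:ℝ) ≤ |x| ^ k := one_le_pow₀ (by rw [abs_of_neg (by linarith : x < 0)]; linarith)
        _ = x ^ k := he.pow_abs x
      have hs : (-1:ℝ) ^ k = 1 := he.neg_one_pow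
      constructor
      · rw [hs, abs_of_nonpos (by linarith)]; ring
      · rw [hs, abs_of_nonneg (by linarith)]; ring
    · have hx : x ^ k ≤ -1 := by
        have h4 : (1:ℝ) ≤ |x| ^ k :=
          one_le_pow₀ (by rw [abs_of_neg (by linarith : x < 0)]; linarith)
        have h2 : |x ^ k| = |x| ^ k := abs_pow x k
        have h3 : x ^ k < 0 := ho.pow_neg (by linarith)
        rw [abs_of_neg h3] at h2; linarith
      have hs : (-1:ℝ) ^ k = -1 := ho.neg_one_pow
      constructor
      · rw [hs, abs_of_nonneg (by linarith)]; ring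
      · rw [hs, abs_of_nonpos (by linarith)]; ring
  · by_cases h2 : 1 < x
    · refine ⟨1, -1, Or.inl rfl, Or.inr rfl, fun k hk => ?_⟩
      have hx : (1:ℝ) ≤ x ^ k := one_le_pow₀ (by linarith)
      constructor
      · rw [one_pow, abs_of_nonpos (by linarith)]; ring
      · rw [one_pow, abs_of_nonneg (by linarith)]; ring
    · refine ⟨1, 1, Or.inl rfl, Or.inl rfl, fun k hk => ?_⟩
      have hx : |x ^ k| ≤ 1 := by
        rw [abs_pow]
        exact pow_le_one₀ (abs_nonneg x) (abs_le.mpr ⟨by linarith, by linarith⟩)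
      rw [abs_le] at hx
      constructor
      · rw [one_pow, abs_of_nonneg (by linarith)]; ring
      · rw [one_pow, abs_of_nonneg (by linarith)]; ring

private lemma key_multiset (M : Multiset ℂ) (hM : M.map (starRingEnd ℂ) = M) :
    ∃ s t : ℂ, (s = 1 ∨ s = -1) ∧ (t = 1 ∨ t = -1) ∧
      ∀ k : ℕ, 0 < k →
        s ^ k * t * (M.map (fun z => 1 - z ^ k)).prod
            = (M.map (fun z => (‖1 - z ^ k‖ : ℂ))).prod ∧
        s ^ k * (M.map (fun z => 1 + z ^ k)).prod
            = (M.map (fun z => (‖1 + z ^ k‖ : ℂ))).prod := by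
  induction M using Multiset.strongInductionOn with
  | ih M IH =>
  rcases eq_or_ne M 0 with rfl | hne
  · exact ⟨1, 1, Or.inl rfl, Or.inl rfl, fun k hk => by simp⟩
  · obtain ⟨z, hz⟩ := Multiset.exists_mem_of_ne_zero hne
    by_cases hzim : z.im = 0
    · -- real element case
      have hzre : z = (z.re : ℂ) := by
        apply Complex.ext <;> simp [hzim]
      set M' := M.erase z with hM'
      have hMeq : M = z ::ₘ M' := (Multiset.cons_erase hz).symm
      have hM'c : M'.map (starRingEnd ℂ) = M' := by
        have hcz : (starRingEnd ℂ) z = z := by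
          rw [hzre]; simp
        rw [hM', Multiset.map_erase _ (RingHom.injective _), hcz, hM]
      obtain ⟨s', t', hs', ht', h'⟩ :=
        IH M' (by rw [hMeq]; exact Multiset.lt_cons_self _ _) hM'c
      obtain ⟨s₀, t₀, hs₀, ht₀, h₀⟩ := real_sign z.re
      refine ⟨(s₀:ℂ) * s', (t₀:ℂ) * t', ?_, ?_, fun k hk => ?_⟩
      · rcases hs₀ with h | h <;> rcases hs' with h' | h' <;> simp [h, h']
      · rcases ht₀ with h | h <;> rcases ht' with h' | h' <;> simp [h, h']
      · obtain ⟨e1, e2⟩ := h' k hk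
        obtain ⟨f1, f2⟩ := h₀ k hk
        have f1' : (s₀:ℂ) ^ k * t₀ * (1 - z ^ k) = (‖1 - z ^ k‖ : ℂ) := by
          rw [hzre, show (1:ℂ) - ((z.re:ℂ)) ^ k = ((1 - z.re ^ k : ℝ) : ℂ) by push_cast; ring,
            Complex.norm_real, Real.norm_eq_abs, ← f1]
          push_cast
          ring
        have f2' : (s₀:ℂ) ^ k * (1 + z ^ k) = (‖1 + z ^ k‖ : ℂ) := by
          rw [hzre, show (1:ℂ) + ((z.re:ℂ)) ^ k = ((1 + z.re ^ k : ℝ) : ℂ) by push_cast; ring,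
            Complex.norm_real, Real.norm_eq_abs, ← f2]
          push_cast
          ring
        rw [hMeq]
        simp only [Multiset.map_cons, Multiset.prod_cons]
        constructor
        · rw [← f1', ← e1]; ring
        · rw [← f2', ← e2]; ring
    · -- complex pair case
      have hczM : (starRingEnd ℂ) z ∈ M := by
        rw [← hM]
        exact Multiset.mem_map_of_mem _ hz
      have hczne : (starRingEnd ℂ) z ≠ z := fun h => hzim (Complex.conj_eq_iff_im.mp h)
      have hcz' : (starRingEnd ℂ) z ∈ M.erase z := (Multiset.mem_erase_of_ne hczne).mpr hczM
      set M'' := (M.erase z).erase ((starRingEnd ℂ) z) with hM''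
      have hMeq : M = z ::ₘ (starRingEnd ℂ) z ::ₘ M'' := by
        rw [hM'', Multiset.cons_erase hcz', Multiset.cons_erase hz]
      have hM''c : M''.map (starRingEnd ℂ) = M'' := by
        rw [hM'', Multiset.map_erase _ (RingHom.injective _),
          Multiset.map_erase _ (RingHom.injective _), hM]
        simp [Multiset.erase_comm]
      have hlt : M'' < M := by
        rw [hMeq]
        calc M'' < (starRingEnd ℂ) z ::ₘ M'' := Multiset.lt_cons_self _ _
        _ < z ::ₘ (starRingEnd ℂ) z ::ₘ M'' := Multiset.lt_cons_self _ _
      obtain ⟨s', t', hs', ht', h'⟩ := IH M'' hlt hM''c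
      refine ⟨s', t', hs', ht', fun k hk => ?_⟩
      obtain ⟨e1, e2⟩ := h' k hk
      have pair1 : (1 - z ^ k) * (1 - ((starRingEnd ℂ) z) ^ k)
          = (‖1 - z ^ k‖ : ℂ) * (‖1 - ((starRingEnd ℂ) z) ^ k‖ : ℂ) := by
        have h1 : 1 - ((starRingEnd ℂ) z) ^ k = (starRingEnd ℂ) (1 - z ^ k) := by simp
        rw [h1, Complex.mul_conj, Complex.norm_conj, Complex.normSq_eq_norm_sq]
        push_cast
        ring
      have pair2 : (1 + z ^ k) * (1 + ((starRingEnd ℂ) z) ^ k)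
          = (‖1 + z ^ k‖ : ℂ) * (‖1 + ((starRingEnd ℂ) z) ^ k‖ : ℂ) := by
        have h1 : 1 + ((starRingEnd ℂ) z) ^ k = (starRingEnd ℂ) (1 + z ^ k) := by simp
        rw [h1, Complex.mul_conj, Complex.norm_conj, Complex.normSq_eq_norm_sq]
        push_cast
        ring
      rw [hMeq]
      simp only [Multiset.map_cons, Multiset.prod_cons]
      constructor
      · rw [← e1]
        rw [show (1 - z ^ k) * ((1 - ((starRingEnd ℂ) z) ^ k) *
              (Multiset.map (fun z => 1 - z ^ k) M'').prod)
            = ((1 - z ^ k) * (1 - ((starRingEnd ℂ) z) ^ k)) *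
              (Multiset.map (fun z => 1 - z ^ k) M'').prod by ring, pair1]
        ring
      · rw [← e2]
        rw [show (1 + z ^ k) * ((1 + ((starRingEnd ℂ) z) ^ k) *
              (Multiset.map (fun z => 1 + z ^ k) M'').prod)
            = ((1 + z ^ k) * (1 + ((starRingEnd ℂ) z) ^ k)) *
              (Multiset.map (fun z => 1 + z ^ k) M'').prod by ring, pair2]
        ring

/-- if `λ₁, …, λₙ` are the complex eigenvalues of `D ∈ GLₙ(ℤ)` (the roots of
its characteristic polynomial, with multiplicity), then there are complex numbers
`μ₁, …, μ_a, ν₁, …, ν_b` with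
`(∏|1-λᵢᵏ| + ∏|1+λᵢᵏ|)/2 = μ₁ᵏ + ⋯ + μ_aᵏ - ν₁ᵏ - ⋯ - ν_bᵏ` for all `k ≥ 1`. -/
theorem stmt1 (n : ℕ) (D : Matrix (Fin n) (Fin n) ℤ) (hD : IsUnit D)
    (lam : Fin n → ℂ)
    (hlam : (D.charpoly).map (Int.castRingHom ℂ) = ∏ i, (X - C (lam i))) :
    ∃ (a b : ℕ) (μ : Fin a → ℂ) (ν : Fin b → ℂ),
      ∀ k : ℕ, 0 < k →
        ((((∏ i, ‖1 - lam i ^ k‖) + ∏ i, ‖1 + lam i ^ k‖) / 2 : ℝ) : ℂ)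
          = (∑ i, μ i ^ k) - ∑ i, ν i ^ k := by
  classical
  set L : Multiset ℂ := Multiset.map lam Finset.univ.val with hL
  have hprod : ((L.map fun a => X - C a).prod : ℂ[X]) = ∏ i, (X - C (lam i)) := by
    rw [hL, Multiset.map_map, Finset.prod_eq_multiset_prod]
    rfl
  have hPconj : ((D.charpoly).map (Int.castRingHom ℂ)).map (starRingEnd ℂ)
      = (D.charpoly).map (Int.castRingHom ℂ) := by
    rw [Polynomial.map_map]
    congr 1
    exact RingHom.ext_int _ _
  have step : ∀ N : Multiset ℂ, (((N.map (starRingEnd ℂ)).map fun a => X - C a).prod : ℂ[X])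
      = ((N.map fun a => X - C a).prod).map (starRingEnd ℂ) := by
    intro N
    rw [Polynomial.map_multiset_prod, Multiset.map_map, Multiset.map_map]
    apply congrArg
    apply Multiset.map_congr rfl
    intro x _
    simp
  have hconjprod : (((L.map (starRingEnd ℂ)).map fun a => X - C a).prod : ℂ[X])
      = (L.map fun a => X - C a).prod := by
    rw [step L, hprod, ← hlam, hPconj, hlam, ← hprod]
  have hLconj : L.map (starRingEnd ℂ) = L := by
    have h := congrArg Polynomial.roots hconjprod
    rwa [Polynomial.roots_multiset_prod_X_sub_C, Polynomial.roots_multiset_prod_X_sub_C] at h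
  obtain ⟨s, t, hs, ht, hkey⟩ := key_multiset L hLconj
  set a : ℕ := Fintype.card (Finset (Fin n)) with ha
  let e : Finset (Fin n) ≃ Fin a := Fintype.equivFin _
  set w : Finset (Fin n) → ℂ :=
    fun S => if t * (-1) ^ S.card = 1 then s * ∏ i ∈ S, lam i else 0 with hw
  refine ⟨a, 0, fun j => w (e.symm j), fun _ => 0, fun k hk => ?_⟩
  have hsum : ∑ j : Fin a, (w (e.symm j)) ^ k = ∑ S : Finset (Fin n), (w S) ^ k :=
    Equiv.sum_comp e.symm (fun S => (w S) ^ k)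
  have hnu : ∑ _i : Fin 0, (0:ℂ) ^ k = 0 := by simp
  rw [hsum, hnu, sub_zero]
  have hLmap : ∀ f : ℂ → ℂ, (L.map f).prod = ∏ i, f (lam i) := by
    intro f
    rw [hL, Multiset.map_map, Finset.prod_eq_multiset_prod]
    rfl
  obtain ⟨e1, e2⟩ := hkey k hk
  rw [hLmap, hLmap] at e1
  rw [hLmap, hLmap] at e2
  rw [Complex.ofReal_div, Complex.ofReal_add, Complex.ofReal_ofNat, Complex.ofReal_prod,
    Complex.ofReal_prod, ← e1, ← e2]
  have ex1 : (∏ i, ((1:ℂ) - lam i ^ k))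
      = ∑ S ∈ (Finset.univ : Finset (Fin n)).powerset,
          (-1:ℂ) ^ S.card * (∏ i ∈ S, lam i) ^ k := by
    calc (∏ i, ((1:ℂ) - lam i ^ k)) = ∏ i, ((-1) * lam i ^ k + 1) := by
          apply Finset.prod_congr rfl; intros; ring
    _ = ∑ S ∈ (Finset.univ : Finset (Fin n)).powerset, ∏ i ∈ S, ((-1:ℂ) * lam i ^ k) := by
          simpa using Finset.prod_add (fun i => (-1:ℂ) * lam i ^ k) (fun _ => (1:ℂ)) Finset.univ
    _ = _ := by
          refine Finset.sum_congr rfl fun S _ => ?_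
          rw [Finset.prod_mul_distrib, Finset.prod_const, Finset.prod_pow]
  have ex2 : (∏ i, ((1:ℂ) + lam i ^ k))
      = ∑ S ∈ (Finset.univ : Finset (Fin n)).powerset, (∏ i ∈ S, lam i) ^ k := by
    calc (∏ i, ((1:ℂ) + lam i ^ k)) = ∏ i, (lam i ^ k + 1) := by
          apply Finset.prod_congr rfl; intros; ring
    _ = ∑ S ∈ (Finset.univ : Finset (Fin n)).powerset, ∏ i ∈ S, (lam i ^ k) := by
          simpa using Finset.prod_add (fun i => lam i ^ k) (fun _ => (1:ℂ)) Finset.univ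
    _ = _ := by
          refine Finset.sum_congr rfl fun S _ => ?_
          rw [Finset.prod_pow]
  rw [ex1, ex2, Finset.powerset_univ, Finset.mul_sum, Finset.mul_sum, ← Finset.sum_add_distrib,
    Finset.sum_div]
  refine Finset.sum_congr rfl fun S _ => ?_
  by_cases h : t * (-1:ℂ) ^ S.card = 1
  · rw [hw]
    simp only [if_pos h]
    rw [mul_pow]
    linear_combination (s ^ k * (∏ i ∈ S, lam i) ^ k / 2) * h
  · have h' : t * (-1:ℂ) ^ S.card = -1 := by
      rcases ht with ht | ht <;> rcases Nat.even_or_odd S.card with hc | hc <;>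
        simp [ht, hc.neg_one_pow] at h ⊢
    rw [hw]
    simp only [if_neg h]
    rw [zero_pow hk.ne']
    linear_combination (s ^ k * (∏ i ∈ S, lam i) ^ k / 2) * h'
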